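/- Let q ≥ 3 and let ∇ ∈ ℝ^{p×n} be the discrete gradient operator of the 3-dimensional regular grid graph on V = {0,…,q−1}³, so n = q³ and p = 3q²(q−1). Then for every integer ℓ with 54 < ℓ ≤ p, κ_∇(ℓ) ≤ n − (1/3)(ℓ + (3ℓ²)^{1/3} + 2(ℓ/3)^{1/3}) + 2/3, where the powers are real cube roots. -/
import Mathlib

/-- Base-`q` encoding of a grid point, used to orient the edges of the grid graph. -/
def enc (q d : ℕ) (v : Fin d → Fin q) : ℕ := ∑ i : Fin d, q ^ (i : ℕ) * (v i : ℕ)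

/-- The (oriented) edges of the regular grid graph on `{0,…,q−1}^d`: pairs of vertices at
ℓ1-distance 1, canonically oriented. They index the rows of the discrete gradient. -/
abbrev OEdge (q d : ℕ) : Type :=
  {e : (Fin d → Fin q) × (Fin d → Fin q) //
    (∑ i, |(e.1 i : ℤ) - (e.2 i : ℤ)|) = 1 ∧ enc q d e.1 < enc q d e.2}

/-- The discrete gradient operator of the regular grid graph: one row per edge
`e = (v₁, v₂)`, with entry `−1` in the column of `v₁`, `+1` in the column of `v₂`. -/
def grad (q d : ℕ) : Matrix (OEdge q d) (Fin d → Fin q) ℝ :=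
  Matrix.of fun e v => if v = e.1.2 then 1 else if v = e.1.1 then -1 else 0

/-- `W_Λ`: the nullspace of the rows of the discrete gradient indexed by `Λ`. -/
noncomputable def Wgrad (q d : ℕ) (Λ : Finset (OEdge q d)) :
    Submodule ℝ ((Fin d → Fin q) → ℝ) :=
  ⨅ e ∈ Λ, LinearMap.ker
    ((LinearMap.proj e : (OEdge q d → ℝ) →ₗ[ℝ] ℝ) ∘ₗ (grad q d).mulVecLin)

/-- `κ_∇(ℓ) = max{dim W_Λ : Λ ⊆ E, |Λ| ≥ ℓ}` for the discrete gradient of the grid. -/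
noncomputable def kappaGrad (q d ℓ : ℕ) : ℕ :=
  (Finset.univ.filter (fun Λ : Finset (OEdge q d) => ℓ ≤ Λ.card)).sup
    (fun Λ => Module.finrank ℝ (Wgrad q d Λ))

namespace GridProof

/-! ### Analytic lemmas -/

lemma cube_rpow_third {x : ℝ} (hx : 0 ≤ x) : (x ^ ((1:ℝ)/3)) ^ 3 = x := by
  rw [← Real.rpow_natCast (x ^ ((1:ℝ)/3)) 3, ← Real.rpow_mul hx]
  norm_num

lemma sq_rpow_third {x : ℝ} (hx : 0 ≤ x) : (x ^ ((1:ℝ)/3)) ^ 2 = x ^ ((2:ℝ)/3) := by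
  rw [← Real.rpow_natCast (x ^ ((1:ℝ)/3)) 2, ← Real.rpow_mul hx]
  norm_num

set_option maxHeartbeats 2000000 in
lemma pair_ineq {x y : ℝ} (hx : 1 ≤ x) (hy : 1 ≤ y) :
    (x + y - 1) ^ ((2:ℝ)/3) + 1 ≤ x ^ ((2:ℝ)/3) + y ^ ((2:ℝ)/3) := by
  have hx0 : (0:ℝ) ≤ x := by linarith
  have hy0 : (0:ℝ) ≤ y := by linarith
  have hxy0 : (0:ℝ) ≤ x + y - 1 := by linarith
  set A := x ^ ((1:ℝ)/3) with hA
  set B := y ^ ((1:ℝ)/3) with hB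
  set G := (x + y - 1) ^ ((1:ℝ)/3) with hG
  have hA1 : 1 ≤ A := Real.one_le_rpow hx (by norm_num)
  have hB1 : 1 ≤ B := Real.one_le_rpow hy (by norm_num)
  have hG0 : 0 ≤ G := Real.rpow_nonneg hxy0 _
  have hA3 : A ^ 3 = x := cube_rpow_third hx0
  have hB3 : B ^ 3 = y := cube_rpow_third hy0
  have hG3 : G ^ 3 = x + y - 1 := cube_rpow_third hxy0
  have hx23 : x ^ ((2:ℝ)/3) = A ^ 2 := (sq_rpow_third hx0).symm
  have hy23 : y ^ ((2:ℝ)/3) = B ^ 2 := (sq_rpow_third hy0).symm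
  have hg23 : (x + y - 1) ^ ((2:ℝ)/3) = G ^ 2 := (sq_rpow_third hxy0).symm
  rw [hx23, hy23, hg23]
  have hABsq : (1:ℝ) ≤ A ^ 2 + B ^ 2 - 1 := by nlinarith
  set t := Real.sqrt (A ^ 2 + B ^ 2 - 1) with ht
  have ht0 : 0 ≤ t := Real.sqrt_nonneg _
  have ht2 : t ^ 2 = A ^ 2 + B ^ 2 - 1 := Real.sq_sqrt (by linarith)
  have key : (A ^ 3 + B ^ 3 - 1) ^ 2 ≤ (A ^ 2 + B ^ 2 - 1) ^ 3 := by
    nlinarith [mul_nonneg (sub_nonneg.2 hA1) (sub_nonneg.2 hB1), sq_nonneg (A - B),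
      mul_nonneg (mul_nonneg (sub_nonneg.2 hA1) (sub_nonneg.2 hB1)) (sq_nonneg (A - B)),
      mul_nonneg (mul_nonneg (mul_nonneg (sub_nonneg.2 hA1) (sub_nonneg.2 hB1)) (sub_nonneg.2 hA1)) (sub_nonneg.2 hB1),
      sq_nonneg (A*B - 1), mul_nonneg (sub_nonneg.2 hA1) (sq_nonneg (B-1)),
      mul_nonneg (sub_nonneg.2 hB1) (sq_nonneg (A-1))]
  have h6 : G ^ 6 ≤ t ^ 6 := by
    have e1 : G ^ 6 = (G ^ 3) ^ 2 := by ring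
    have e2 : t ^ 6 = (t ^ 2) ^ 3 := by ring
    rw [e1, e2, hG3, ht2]
    have : x + y - 1 = A ^ 3 + B ^ 3 - 1 := by rw [hA3, hB3]
    rw [this]; exact key
  have hGt : G ≤ t :=
    (pow_le_pow_iff_left₀ hG0 ht0 (by norm_num : (6:ℕ) ≠ 0)).mp h6
  nlinarith [sq_nonneg (G - t), sq_nonneg t]

set_option maxHeartbeats 2000000 in
lemma analytic_lemma {u l : ℝ} (hu : 1 ≤ u) (hl0 : 0 ≤ l)
    (h : l ≤ 3 * u - 3 * u ^ ((2:ℝ)/3)) :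
    ((l/3) ^ ((1:ℝ)/3)) ^ 3 + ((l/3) ^ ((1:ℝ)/3)) ^ 2 + (2/3) * ((l/3) ^ ((1:ℝ)/3)) + 1/3 ≤ u := by
  have hu0 : (0:ℝ) ≤ u := by linarith
  set L := (l/3) ^ ((1:ℝ)/3) with hLdef
  have hL0 : 0 ≤ L := Real.rpow_nonneg (by linarith) _
  have hL3 : L ^ 3 = l / 3 := cube_rpow_third (by linarith)
  set t := u ^ ((1:ℝ)/3) with htdef
  have ht1 : 1 ≤ t := Real.one_le_rpow hu (by norm_num)
  have ht3 : t ^ 3 = u := cube_rpow_third hu0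
  have ht2 : t ^ 2 = u ^ ((2:ℝ)/3) := sq_rpow_third hu0
  have hmain : L ^ 3 ≤ t ^ 3 - t ^ 2 := by rw [hL3, ht3, ht2]; linarith
  set s := Real.sqrt (L ^ 2 + (2/3) * L + 1/3) with hs
  have hs0 : 0 ≤ s := Real.sqrt_nonneg _
  have hs2 : s ^ 2 = L ^ 2 + (2/3) * L + 1/3 := Real.sq_sqrt (by positivity)
  have hcert : (L ^ 2 + (2/3) * L + 1/3) ^ 3 ≤ (L ^ 3 + L ^ 2 + (2/3) * L + 1/3) ^ 2 := by
    nlinarith [mul_nonneg (mul_nonneg hL0 hL0) hL0, sq_nonneg L, hL0]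
  have hs3 : s ^ 3 ≤ L ^ 3 + s ^ 2 := by
    have h1 : (s ^ 3) ^ 2 ≤ (L ^ 3 + s ^ 2) ^ 2 := by
      have e1 : (s ^ 3) ^ 2 = (s ^ 2) ^ 3 := by ring
      rw [e1, hs2]
      linear_combination hcert
    have hrhs0 : 0 ≤ L ^ 3 + s ^ 2 := by positivity
    exact (pow_le_pow_iff_left₀ (by positivity) hrhs0 (by norm_num : (2:ℕ) ≠ 0)).mp h1
  have hts : s ≤ t := by
    by_contra hc
    push_neg at hc
    have hs1 : 1 < s := lt_of_le_of_lt ht1 hc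
    have hfac : 0 < s ^ 2 + s * t + t ^ 2 - s - t := by nlinarith
    have hprod : 0 < (s - t) * (s ^ 2 + s * t + t ^ 2 - s - t) := mul_pos (by linarith) hfac
    nlinarith [hprod, hmain, hs3]
  have hsq : s ^ 2 ≤ t ^ 2 := by nlinarith
  rw [← hL3] at *
  nlinarith [hmain, hsq, hs2, ht3]

lemma amgm3 {a b c S : ℝ} (ha : 0 ≤ a) (hb : 0 ≤ b) (hc : 0 ≤ c) (hS : 0 ≤ S)
    (h : S ^ 2 ≤ a * b * c) : 3 * S ^ ((2:ℝ)/3) ≤ a + b + c := by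
  have hM0 : 0 ≤ a + b + c := by positivity
  have hcube : 27 * (a * b * c) ≤ (a + b + c) ^ 3 := by
    nlinarith [mul_nonneg ha (sq_nonneg (b - c)), mul_nonneg hb (sq_nonneg (a - c)),
      mul_nonneg hc (sq_nonneg (a - b)),
      mul_nonneg (add_nonneg (add_nonneg ha hb) hc) (sq_nonneg (a - b)),
      mul_nonneg (add_nonneg (add_nonneg ha hb) hc) (sq_nonneg (b - c)),
      mul_nonneg (add_nonneg (add_nonneg ha hb) hc) (sq_nonneg (a - c)),
      mul_nonneg (mul_nonneg ha hb) hc]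
  have h27 : 27 * S ^ 2 ≤ (a + b + c) ^ 3 := by nlinarith
  have hstep : (27 * S ^ 2) ^ ((1:ℝ)/3) ≤ ((a + b + c) ^ 3) ^ ((1:ℝ)/3) :=
    Real.rpow_le_rpow (by positivity) h27 (by norm_num)
  have hlhs : (27 * S ^ 2) ^ ((1:ℝ)/3) = 3 * S ^ ((2:ℝ)/3) := by
    rw [Real.mul_rpow (by norm_num) (by positivity)]
    congr 1
    · rw [show (27:ℝ) = 3 ^ (3:ℕ) by norm_num, ← Real.rpow_natCast 3 3,
        ← Real.rpow_mul (by norm_num : (0:ℝ) ≤ 3)]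
      norm_num
    · rw [← Real.rpow_natCast S 2, ← Real.rpow_mul hS]
      norm_num
  have hrhs : ((a + b + c) ^ 3) ^ ((1:ℝ)/3) = a + b + c := by
    rw [← Real.rpow_natCast (a + b + c) 3, ← Real.rpow_mul hM0]
    norm_num
  rw [hlhs, hrhs] at hstep
  exact hstep

lemma merge_lemma {ι : Type*} (s : Finset ι) (hs : s.Nonempty) (f : ι → ℝ)
    (hf : ∀ i ∈ s, 1 ≤ f i) :
    ((∑ i ∈ s, f i) - s.card + 1) ^ ((2:ℝ)/3) + (s.card - 1) ≤ ∑ i ∈ s, (f i) ^ ((2:ℝ)/3) := by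
  classical
  induction hs using Finset.Nonempty.cons_induction with
  | singleton a =>
      simp only [Finset.sum_singleton, Finset.card_singleton, Nat.cast_one]
      ring_nf
      exact le_rfl
  | cons a s ha hs ih =>
      have hfa : 1 ≤ f a := hf a (Finset.mem_cons_self a s)
      have hfs : ∀ i ∈ s, 1 ≤ f i := fun i hi => hf i (Finset.mem_cons.mpr (Or.inr hi))
      have ihs := ih hfs
      have hsum1 : (s.card : ℝ) ≤ ∑ i ∈ s, f i := by
        calc (s.card : ℝ) = ∑ _i ∈ s, (1:ℝ) := by rw [Finset.sum_const]; ring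
          _ ≤ ∑ i ∈ s, f i := Finset.sum_le_sum hfs
      set y := (∑ i ∈ s, f i) - s.card + 1 with hy
      have hy1 : 1 ≤ y := by rw [hy]; linarith
      have hpair := pair_ineq hfa hy1
      rw [Finset.sum_cons, Finset.sum_cons, Finset.card_cons]
      push_cast
      have harg : f a + (∑ i ∈ s, f i) - ((s.card : ℝ) + 1) + 1 = f a + y - 1 := by rw [hy]; ring
      rw [harg]
      linarith

/-! ### Edge structure -/

variable {q : ℕ}

lemma edge_exists (e : OEdge q 3) :
    ∃ d : Fin 3, (∀ j, j ≠ d → e.1.1 j = e.1.2 j) ∧ ((e.1.2 d : ℕ) = (e.1.1 d : ℕ) + 1) := by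
  obtain ⟨⟨a, b⟩, hsum, henc⟩ := e
  simp only at hsum henc ⊢
  rw [Fin.sum_univ_three] at hsum
  have h0 := abs_nonneg ((a 0 : ℤ) - (b 0 : ℤ))
  have h1 := abs_nonneg ((a 1 : ℤ) - (b 1 : ℤ))
  have h2 := abs_nonneg ((a 2 : ℤ) - (b 2 : ℤ))
  have hcases : ∃ d : Fin 3, |(a d : ℤ) - (b d : ℤ)| = 1 ∧
      ∀ j, j ≠ d → |(a j : ℤ) - (b j : ℤ)| = 0 := by
    have : (|(a 0 : ℤ) - b 0| = 1 ∧ |(a 1 : ℤ) - b 1| = 0 ∧ |(a 2 : ℤ) - b 2| = 0) ∨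
        (|(a 0 : ℤ) - b 0| = 0 ∧ |(a 1 : ℤ) - b 1| = 1 ∧ |(a 2 : ℤ) - b 2| = 0) ∨
        (|(a 0 : ℤ) - b 0| = 0 ∧ |(a 1 : ℤ) - b 1| = 0 ∧ |(a 2 : ℤ) - b 2| = 1) := by omega
    rcases this with ⟨u, v, w⟩ | ⟨u, v, w⟩ | ⟨u, v, w⟩
    · exact ⟨0, u, fun j hj => by fin_cases j <;> simp_all⟩
    · exact ⟨1, v, fun j hj => by fin_cases j <;> simp_all⟩
    · exact ⟨2, w, fun j hj => by fin_cases j <;> simp_all⟩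
  obtain ⟨d, hd1, hd0⟩ := hcases
  have heq : ∀ j, j ≠ d → a j = b j := by
    intro j hj
    have := hd0 j hj
    rw [abs_eq_zero, sub_eq_zero] at this
    have h2 : ((a j : ℕ) : ℤ) = ((b j : ℕ) : ℤ) := this
    exact Fin.ext (by exact_mod_cast h2)
  refine ⟨d, fun j hj => heq j hj, ?_⟩
  have hencZ : (enc q 3 a : ℤ) < (enc q 3 b : ℤ) := by exact_mod_cast henc
  have hdiff : (enc q 3 b : ℤ) - (enc q 3 a : ℤ) = (q : ℤ) ^ (d : ℕ) * ((b d : ℤ) - (a d : ℤ)) := by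
    unfold enc
    push_cast
    rw [← Finset.sum_sub_distrib]
    rw [Finset.sum_eq_single d]
    · ring
    · intro j _ hj
      rw [heq j hj]; ring
    · intro h; exact absurd (Finset.mem_univ d) h
  have hq0 : 0 < q := (a d).pos
  have hqd : (0:ℤ) < (q : ℤ) ^ (d : ℕ) := by positivity
  have hbd : (0:ℤ) < (b d : ℤ) - (a d : ℤ) := by
    by_contra hc
    push_neg at hc
    nlinarith [hdiff, hencZ, mul_nonpos_of_nonneg_of_nonpos hqd.le hc]
  rw [abs_eq (by norm_num : (0:ℤ) ≤ 1)] at hd1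
  rcases hd1 with h | h
  · omega
  · omega

/-- the direction of an edge -/
def dir (e : OEdge q 3) : Fin 3 :=
  if e.1.1 0 ≠ e.1.2 0 then 0 else if e.1.1 1 ≠ e.1.2 1 then 1 else 2

lemma dir_spec (e : OEdge q 3) :
    (∀ j, j ≠ dir e → e.1.1 j = e.1.2 j) ∧ ((e.1.2 (dir e) : ℕ) = (e.1.1 (dir e) : ℕ) + 1) := by
  obtain ⟨d, hj, hd⟩ := edge_exists e
  have hne : e.1.1 d ≠ e.1.2 d := fun hcon => by
    rw [hcon] at hd; omega
  have hd3 : d = 0 ∨ d = 1 ∨ d = 2 := by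
    rcases d with ⟨dv, hdv⟩
    rcases (by omega : dv = 0 ∨ dv = 1 ∨ dv = 2) with h | h | h <;> subst h
    · exact Or.inl rfl
    · exact Or.inr (Or.inl rfl)
    · exact Or.inr (Or.inr rfl)
  have : dir e = d := by
    rcases hd3 with h | h | h <;> subst h <;> unfold dir
    · simp [hne]
    · have h0 : e.1.1 0 = e.1.2 0 := hj 0 (by decide)
      simp [h0, hne]
    · have h0 : e.1.1 0 = e.1.2 0 := hj 0 (by decide)
      have h1 : e.1.1 1 = e.1.2 1 := hj 1 (by decide)
      simp [h0, h1]
  rw [this]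
  exact ⟨hj, hd⟩

lemma edge_ne (e : OEdge q 3) : e.1.1 ≠ e.1.2 := by
  obtain ⟨_, hd⟩ := dir_spec e
  intro hcon
  rw [hcon] at hd
  omega

lemma edge_inj {e e' : OEdge q 3} (h1 : e.1.1 = e'.1.1) (h2 : dir e = dir e') : e = e' := by
  obtain ⟨hj, hd⟩ := dir_spec e
  obtain ⟨hj', hd'⟩ := dir_spec e'
  apply Subtype.ext
  apply Prod.ext h1
  funext j
  by_cases hcase : j = dir e
  · subst hcase
    apply Fin.ext
    have hd'2 : (e'.1.2 (dir e) : ℕ) = (e'.1.1 (dir e) : ℕ) + 1 := by rw [h2]; exact hd'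
    have h11 : (e.1.1 (dir e) : ℕ) = (e'.1.1 (dir e) : ℕ) := by rw [h1]
    omega
  · rw [← hj j hcase, h1, hj' j (h2 ▸ hcase)]

/-! ### Projections and Loomis–Whitney -/

variable [NeZero q]

/-- projection forgetting coordinate `d` (by zeroing it) -/
def prj (d : Fin 3) (v : Fin 3 → Fin q) : Fin 3 → Fin q := Function.update v d 0

lemma prj_apply_ne (d : Fin 3) (v : Fin 3 → Fin q) {j : Fin 3} (h : j ≠ d) :
    prj d v j = v j := Function.update_of_ne h _ _

lemma prj_apply_eq (d : Fin 3) (v : Fin 3 → Fin q) : prj d v d = 0 :=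
  Function.update_self _ _ _

/-- discrete Loomis–Whitney inequality in dimension 3 -/
lemma loomis_whitney (S : Finset (Fin 3 → Fin q)) :
    ((S.card : ℝ)) ^ 2 ≤
      ((S.image (prj 0)).card : ℝ) * ((S.image (prj 1)).card : ℝ) * ((S.image (prj 2)).card : ℝ) := by
  classical
  set X := (S.image (prj 0)).card
  set Y := (S.image (prj 1)).card
  set C := (S.image (prj 2)).card
  set Sl : Fin q → Finset (Fin 3 → Fin q) := fun z => S.filter (fun v => v 2 = z) with hSl
  have hslice_card : S.card = ∑ z : Fin q, (Sl z).card :=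
    Finset.card_eq_sum_card_fiberwise (fun v _ => Finset.mem_univ (v 2))
  have hC : ∀ z, (Sl z).card ≤ C := by
    intro z
    apply Finset.card_le_card_of_injOn (prj 2)
    · intro v hv
      exact Finset.mem_image_of_mem _ (Finset.mem_filter.mp hv).1
    · intro u hu v hv huv
      simp only [Finset.coe_filter, Set.mem_setOf_eq, hSl] at hu hv
      funext j
      by_cases hj : j = 2
      · subst hj; rw [hu.2, hv.2]
      · rw [← prj_apply_ne 2 u hj, ← prj_apply_ne 2 v hj, huv]
  have h2D : ∀ z, (Sl z).card ≤ ((Sl z).image (prj 0)).card * ((Sl z).image (prj 1)).card := by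
    intro z
    have := Finset.card_le_card_of_injOn (fun v => (prj 0 v, prj 1 v))
      (s := Sl z) (t := ((Sl z).image (prj 0)) ×ˢ ((Sl z).image (prj 1)))
      (fun v hv => Finset.mk_mem_product (Finset.mem_image_of_mem _ hv) (Finset.mem_image_of_mem _ hv))
      (by
        intro u _ v _ huv
        simp only [Prod.mk.injEq] at huv
        funext j
        by_cases hj : j = 0
        · subst hj
          have := congrFun huv.2 0
          rwa [prj_apply_ne 1 u (by decide), prj_apply_ne 1 v (by decide)] at this
        · have := congrFun huv.1 j
          rwa [prj_apply_ne 0 u hj, prj_apply_ne 0 v hj] at this)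
    simpa [Finset.card_product] using this
  have hsum_proj : ∀ d : Fin 3, d ≠ 2 →
      ∑ z : Fin q, ((Sl z).image (prj d)).card ≤ (S.image (prj d)).card := by
    intro d hd
    have heq : ∀ z, (Sl z).image (prj d) = (S.image (prj d)).filter (fun w => w 2 = z) := by
      intro z
      ext w
      constructor
      · intro hw
        rw [Finset.mem_image] at hw
        obtain ⟨v, hv, rfl⟩ := hw
        rw [Finset.mem_filter] at hv
        rw [Finset.mem_filter]
        refine ⟨Finset.mem_image_of_mem _ hv.1, ?_⟩
        rw [prj_apply_ne d v (Ne.symm hd)]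
        exact hv.2
      · intro hw
        rw [Finset.mem_filter, Finset.mem_image] at hw
        obtain ⟨⟨v, hv, rfl⟩, h2⟩ := hw
        rw [Finset.mem_image]
        exact ⟨v, Finset.mem_filter.mpr ⟨hv, by rwa [prj_apply_ne d v (Ne.symm hd)] at h2⟩, rfl⟩
    have hfin : ∑ z : Fin q, ((Sl z).image (prj d)).card = (S.image (prj d)).card := by
      rw [Finset.sum_congr rfl (fun z (_ : z ∈ Finset.univ) => by rw [heq z])]
      exact (Finset.card_eq_sum_card_fiberwise (fun v _ => Finset.mem_univ (v 2))).symm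
    exact hfin.le
  have key : (S.card : ℝ) ≤ Real.sqrt C * (Real.sqrt X * Real.sqrt Y) := by
    have h1 : (S.card : ℝ) = ∑ z : Fin q, ((Sl z).card : ℝ) := by
      rw [hslice_card]; push_cast; ring
    rw [h1]
    have hz : ∀ z : Fin q, ((Sl z).card : ℝ) ≤
        Real.sqrt C * (Real.sqrt (((Sl z).image (prj 0)).card) * Real.sqrt (((Sl z).image (prj 1)).card)) := by
      intro z
      have hsq : ((Sl z).card : ℝ) ^ 2 ≤
          (C : ℝ) * ((((Sl z).image (prj 0)).card : ℝ) * (((Sl z).image (prj 1)).card : ℝ)) := by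
        have hcast : (((Sl z).card : ℝ)) * (((Sl z).card : ℝ)) ≤
            (C : ℝ) * ((((Sl z).image (prj 0)).card : ℝ) * (((Sl z).image (prj 1)).card : ℝ)) := by
          exact_mod_cast Nat.mul_le_mul (hC z) (h2D z)
        nlinarith [hcast]
      calc ((Sl z).card : ℝ) = Real.sqrt (((Sl z).card : ℝ) ^ 2) := by
            rw [Real.sqrt_sq (by positivity)]
        _ ≤ Real.sqrt ((C : ℝ) * ((((Sl z).image (prj 0)).card : ℝ) * (((Sl z).image (prj 1)).card : ℝ))) :=
            Real.sqrt_le_sqrt hsq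
        _ = Real.sqrt C * (Real.sqrt (((Sl z).image (prj 0)).card) * Real.sqrt (((Sl z).image (prj 1)).card)) := by
            rw [Real.sqrt_mul (by positivity), Real.sqrt_mul (by positivity)]
    calc ∑ z : Fin q, ((Sl z).card : ℝ)
        ≤ ∑ z : Fin q, Real.sqrt C * (Real.sqrt (((Sl z).image (prj 0)).card) * Real.sqrt (((Sl z).image (prj 1)).card)) :=
          Finset.sum_le_sum (fun z _ => hz z)
      _ = Real.sqrt C * ∑ z : Fin q, Real.sqrt (((Sl z).image (prj 0)).card) * Real.sqrt (((Sl z).image (prj 1)).card) := by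
          rw [Finset.mul_sum]
      _ ≤ Real.sqrt C * (Real.sqrt (∑ z : Fin q, (((Sl z).image (prj 0)).card : ℝ)) *
            Real.sqrt (∑ z : Fin q, (((Sl z).image (prj 1)).card : ℝ))) := by
          apply mul_le_mul_of_nonneg_left _ (Real.sqrt_nonneg _)
          exact Real.sum_sqrt_mul_sqrt_le _ (fun i => by positivity) (fun i => by positivity)
      _ ≤ Real.sqrt C * (Real.sqrt X * Real.sqrt Y) := by
          apply mul_le_mul_of_nonneg_left _ (Real.sqrt_nonneg _)
          apply mul_le_mul
          · apply Real.sqrt_le_sqrt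
            exact_mod_cast hsum_proj 0 (by decide)
          · apply Real.sqrt_le_sqrt
            exact_mod_cast hsum_proj 1 (by decide)
          · exact Real.sqrt_nonneg _
          · exact Real.sqrt_nonneg _
  have hS0 : (0:ℝ) ≤ (S.card : ℝ) := by positivity
  have h2 : ((S.card : ℝ)) ^ 2 ≤ (Real.sqrt C * (Real.sqrt X * Real.sqrt Y)) ^ 2 :=
    pow_le_pow_left₀ hS0 key 2
  calc ((S.card : ℝ)) ^ 2 ≤ (Real.sqrt C * (Real.sqrt X * Real.sqrt Y)) ^ 2 := h2
    _ = (Real.sqrt C)^2 * ((Real.sqrt X)^2 * (Real.sqrt Y)^2) := by ring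
    _ = (C : ℝ) * ((X : ℝ) * (Y : ℝ)) := by
        rw [Real.sq_sqrt (by positivity), Real.sq_sqrt (by positivity), Real.sq_sqrt (by positivity)]
    _ = (X : ℝ) * (Y : ℝ) * (C : ℝ) := by ring

/-! ### The graph generated by an edge set and the kernel bound -/

/-- the graph on grid points generated by the edge set Λ -/
@[nolint unusedArguments]
def gph (q : ℕ) (Λ : Finset (OEdge q 3)) : SimpleGraph (Fin 3 → Fin q) :=
  SimpleGraph.fromRel (fun u v => ∃ e ∈ Λ, e.1.1 = u ∧ e.1.2 = v)

instance (Λ : Finset (OEdge q 3)) : DecidableRel (gph q Λ).Adj := fun u v =>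
  decidable_of_iff (u ≠ v ∧ ((∃ e ∈ Λ, e.1.1 = u ∧ e.1.2 = v) ∨ ∃ e ∈ Λ, e.1.1 = v ∧ e.1.2 = u))
    (by rw [gph, SimpleGraph.fromRel_adj])

noncomputable instance (Λ : Finset (OEdge q 3)) :
    DecidableEq (gph q Λ).ConnectedComponent := Classical.decEq _

lemma mem_Wgrad {Λ : Finset (OEdge q 3)} (x : (Fin 3 → Fin q) → ℝ) :
    x ∈ Wgrad q 3 Λ ↔ ∀ e ∈ Λ, x e.1.2 = x e.1.1 := by
  unfold Wgrad
  simp only [Submodule.mem_iInf, LinearMap.mem_ker, LinearMap.coe_comp, Function.comp_apply,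
    LinearMap.proj_apply, Matrix.mulVecLin_apply]
  have hrow : ∀ e : OEdge q 3, (grad q 3).mulVec x e = x e.1.2 - x e.1.1 := by
    intro e
    have hne : e.1.1 ≠ e.1.2 := edge_ne e
    unfold Matrix.mulVec dotProduct grad
    simp only [Matrix.of_apply]
    have hterm : ∀ v : Fin 3 → Fin q,
        (if v = e.1.2 then (1:ℝ) else if v = e.1.1 then -1 else 0) * x v
          = (if v = e.1.2 then x e.1.2 else 0) + (if v = e.1.1 then -(x e.1.1) else 0) := by
      intro v
      by_cases h2 : v = e.1.2
      · subst h2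
        rw [if_pos rfl, if_pos rfl, if_neg (fun h => hne h.symm)]
        ring
      · rw [if_neg h2, if_neg h2]
        by_cases h1 : v = e.1.1
        · subst h1; rw [if_pos rfl, if_pos rfl]; ring
        · rw [if_neg h1, if_neg h1]; ring
    rw [Finset.sum_congr rfl (fun v _ => hterm v), Finset.sum_add_distrib]
    simp only [Finset.sum_ite_eq', Finset.mem_univ, if_true]
    ring
  constructor
  · intro h e he
    have := h e he
    rw [hrow e] at this
    linarith
  · intro h e he
    rw [hrow e, h e he]
    ring

lemma adj_eq {Λ : Finset (OEdge q 3)} {x : (Fin 3 → Fin q) → ℝ} (hx : x ∈ Wgrad q 3 Λ)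
    {u v : Fin 3 → Fin q} (h : (gph q Λ).Adj u v) : x u = x v := by
  rw [mem_Wgrad] at hx
  rw [gph, SimpleGraph.fromRel_adj] at h
  rcases h.2 with ⟨e, he, h1, h2⟩ | ⟨e, he, h1, h2⟩
  · rw [← h1, ← h2]; exact (hx e he).symm
  · rw [← h1, ← h2]; exact hx e he

lemma finrank_Wgrad_le (Λ : Finset (OEdge q 3)) :
    Module.finrank ℝ (Wgrad q 3 Λ) ≤ Fintype.card (gph q Λ).ConnectedComponent := by
  classical
  set G := gph q Λ
  set Φ : ((G.ConnectedComponent → ℝ) →ₗ[ℝ] ((Fin 3 → Fin q) → ℝ)) :=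
    LinearMap.funLeft ℝ ℝ (G.connectedComponentMk) with hΦ
  have hle : Wgrad q 3 Λ ≤ LinearMap.range Φ := by
    intro x hx
    have hwalk : ∀ (v w : Fin 3 → Fin q) (p : G.Walk v w), p.IsPath → x v = x w := by
      intro v w p _
      induction p with
      | nil => rfl
      | cons h p ih => exact (adj_eq hx h).trans (ih (by simp_all [SimpleGraph.Walk.isPath_def]))
    refine ⟨SimpleGraph.ConnectedComponent.lift x hwalk, ?_⟩
    funext v
    rfl
  calc Module.finrank ℝ (Wgrad q 3 Λ) ≤ Module.finrank ℝ (LinearMap.range Φ) :=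
        Submodule.finrank_mono hle
    _ ≤ Module.finrank ℝ (G.ConnectedComponent → ℝ) := LinearMap.finrank_range_le Φ
    _ = Fintype.card G.ConnectedComponent := Module.finrank_fintype_fun_eq_card ℝ

/-! ### Per-component counting -/

variable (Λ : Finset (OEdge q 3))

/-- vertex set of a component -/
noncomputable def SK (K : (gph q Λ).ConnectedComponent) : Finset (Fin 3 → Fin q) :=
  Finset.univ.filter (fun v => (gph q Λ).connectedComponentMk v = K)

/-- edges of Λ inside a component -/
noncomputable def LK (K : (gph q Λ).ConnectedComponent) : Finset (OEdge q 3) :=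
  Λ.filter (fun e => (gph q Λ).connectedComponentMk e.1.1 = K)

lemma adj_of_mem {e : OEdge q 3} (he : e ∈ Λ) : (gph q Λ).Adj e.1.1 e.1.2 := by
  rw [gph, SimpleGraph.fromRel_adj]
  exact ⟨edge_ne e, Or.inl ⟨e, he, rfl, rfl⟩⟩

lemma endpoints_in_SK {K : (gph q Λ).ConnectedComponent} {e : OEdge q 3} (he : e ∈ LK Λ K) :
    e.1.1 ∈ SK Λ K ∧ e.1.2 ∈ SK Λ K := by
  unfold LK at he
  rw [Finset.mem_filter] at he
  have hadj := adj_of_mem Λ he.1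
  have h2 : (gph q Λ).connectedComponentMk e.1.2 = K := by
    rw [← SimpleGraph.ConnectedComponent.connectedComponentMk_eq_of_adj hadj]
    exact he.2
  exact ⟨Finset.mem_filter.mpr ⟨Finset.mem_univ _, he.2⟩,
    Finset.mem_filter.mpr ⟨Finset.mem_univ _, h2⟩⟩

lemma dir_count (K : (gph q Λ).ConnectedComponent) (d : Fin 3) :
    ((LK Λ K).filter (fun e => dir e = d)).card + ((SK Λ K).image (prj d)).card ≤ (SK Λ K).card := by
  classical
  set F := (LK Λ K).filter (fun e => dir e = d) with hF
  set T := F.image (fun e => e.1.1) with hT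
  have hcardT : T.card = F.card := by
    rw [hT]
    apply Finset.card_image_of_injOn
    intro e he e' he' h
    have hde : dir e = d := (Finset.mem_filter.mp he).2
    have hde' : dir e' = d := (Finset.mem_filter.mp he').2
    exact edge_inj h (by rw [hde, hde'])
  have hTS : T ⊆ SK Λ K := by
    intro v hv
    rw [hT, Finset.mem_image] at hv
    obtain ⟨e, he, rfl⟩ := hv
    exact (endpoints_in_SK Λ (Finset.mem_filter.mp he).1).1
  have hsurj : ((SK Λ K).image (prj d)).card ≤ ((SK Λ K) \ T).card := by
    apply Finset.card_le_card_of_surjOn (prj d)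
    intro w hw
    rw [Finset.coe_image, Set.mem_image] at hw
    obtain ⟨v, hv, hvw⟩ := hw
    have hvS : v ∈ SK Λ K := hv
    set Fw := (SK Λ K).filter (fun v' => prj d v' = w) with hFw
    have hFwne : Fw.Nonempty := ⟨v, Finset.mem_filter.mpr ⟨hvS, hvw⟩⟩
    obtain ⟨v₀, hv₀, hmax⟩ := Finset.exists_max_image Fw (fun v' => (v' d : ℕ)) hFwne
    rw [Finset.mem_filter] at hv₀
    refine ⟨v₀, ?_, hv₀.2⟩
    rw [Finset.coe_sdiff, Set.mem_diff]
    refine ⟨hv₀.1, ?_⟩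
    intro hv₀T
    rw [hT, Finset.coe_image, Set.mem_image] at hv₀T
    obtain ⟨e, heF, he1⟩ := hv₀T
    have heF' : e ∈ F := heF
    have hde : dir e = d := (Finset.mem_filter.mp heF').2
    have hspec := dir_spec e
    have he2S : e.1.2 ∈ SK Λ K := (endpoints_in_SK Λ (Finset.mem_filter.mp heF').1).2
    have hprjeq : prj d e.1.2 = w := by
      have : prj d e.1.2 = prj d e.1.1 := by
        funext j
        by_cases hj : j = d
        · subst hj; rw [prj_apply_eq, prj_apply_eq]
        · rw [prj_apply_ne d _ hj, prj_apply_ne d _ hj]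
          exact (hspec.1 j (by rw [hde]; exact hj)).symm
      rw [this, he1, hv₀.2]
    have he2Fw : e.1.2 ∈ Fw := Finset.mem_filter.mpr ⟨he2S, hprjeq⟩
    have hmax2 := hmax e.1.2 he2Fw
    have hd2 : (e.1.2 d : ℕ) = (e.1.1 d : ℕ) + 1 := by rw [← hde]; exact hspec.2
    rw [← he1] at hmax2
    omega
  have hsdiff : ((SK Λ K) \ T).card = (SK Λ K).card - T.card := Finset.card_sdiff_of_subset hTS
  have hTle : T.card ≤ (SK Λ K).card := Finset.card_le_card hTS
  omega

lemma comp_bound (K : (gph q Λ).ConnectedComponent) :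
    ((LK Λ K).card : ℝ) ≤ 3 * ((SK Λ K).card : ℝ) - 3 * ((SK Λ K).card : ℝ) ^ ((2:ℝ)/3) := by
  classical
  have hsplit : (LK Λ K).card = ∑ d : Fin 3, ((LK Λ K).filter (fun e => dir e = d)).card :=
    Finset.card_eq_sum_card_fiberwise (fun e _ => Finset.mem_univ (dir e))
  have hd : ∀ d : Fin 3, (((LK Λ K).filter (fun e => dir e = d)).card : ℝ) ≤
      ((SK Λ K).card : ℝ) - (((SK Λ K).image (prj d)).card : ℝ) := by
    intro d
    have := dir_count Λ K d
    have : ((((LK Λ K).filter (fun e => dir e = d)).card + ((SK Λ K).image (prj d)).card : ℕ) : ℝ)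
        ≤ ((SK Λ K).card : ℝ) := by exact_mod_cast this
    push_cast at this
    linarith
  have hLW := loomis_whitney (SK Λ K)
  have hAM := amgm3 (a := (((SK Λ K).image (prj 0)).card : ℝ)) (b := (((SK Λ K).image (prj 1)).card : ℝ))
    (c := (((SK Λ K).image (prj 2)).card : ℝ)) (S := ((SK Λ K).card : ℝ))
    (by positivity) (by positivity) (by positivity) (by positivity) hLW
  have hcast : ((LK Λ K).card : ℝ) = ∑ d : Fin 3, (((LK Λ K).filter (fun e => dir e = d)).card : ℝ) := by
    rw [hsplit]; push_cast; ring
  rw [hcast, Fin.sum_univ_three]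
  have h0 := hd 0
  have h1 := hd 1
  have h2 := hd 2
  linarith

end GridProof

section Main

open GridProof

set_option maxHeartbeats 1000000 in
theorem main_bound (q : ℕ) (hq : 3 ≤ q) (ℓ : ℕ) (Λ : Finset (OEdge q 3)) (hΛ : ℓ ≤ Λ.card) :
    (Module.finrank ℝ (Wgrad q 3 Λ) : ℝ) ≤
      (q : ℝ) ^ 3 - (1 / 3) * ((ℓ : ℝ) + (3 * (ℓ : ℝ) ^ 2) ^ ((1 : ℝ) / 3) +
        2 * ((ℓ : ℝ) / 3) ^ ((1 : ℝ) / 3)) + 2 / 3 := by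
  classical
  haveI : NeZero q := ⟨by omega⟩
  set G := gph q Λ with hG
  set n := Fintype.card (Fin 3 → Fin q) with hn
  set c := Fintype.card G.ConnectedComponent with hc
  have hncard : n = q ^ 3 := by
    rw [hn, Fintype.card_fun, Fintype.card_fin, Fintype.card_fin]
  -- vertex sum
  have hvsum : n = ∑ K : G.ConnectedComponent, (SK Λ K).card := by
    rw [hn, ← Finset.card_univ]
    exact Finset.card_eq_sum_card_fiberwise (fun v _ => Finset.mem_univ _)
  -- edge sum
  have hesum : Λ.card = ∑ K : G.ConnectedComponent, (LK Λ K).card := by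
    exact Finset.card_eq_sum_card_fiberwise (fun e _ => Finset.mem_univ _)
  -- components nonempty
  have hSKne : ∀ K : G.ConnectedComponent, (1:ℝ) ≤ ((SK Λ K).card : ℝ) := by
    intro K
    obtain ⟨v, rfl⟩ := K.exists_rep
    have : v ∈ SK Λ (G.connectedComponentMk v) :=
      Finset.mem_filter.mpr ⟨Finset.mem_univ _, rfl⟩
    have hpos : 0 < (SK Λ (G.connectedComponentMk v)).card := Finset.card_pos.mpr ⟨v, this⟩
    exact_mod_cast hpos
  have hccne : (Finset.univ : Finset G.ConnectedComponent).Nonempty :=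
    ⟨G.connectedComponentMk (fun _ => ⟨0, by omega⟩), Finset.mem_univ _⟩
  have hcn : c ≤ n := Fintype.card_le_of_surjective G.connectedComponentMk
    (fun K => K.exists_rep)
  -- main chain
  have hmerge := merge_lemma (Finset.univ : Finset G.ConnectedComponent) hccne
    (fun K => ((SK Λ K).card : ℝ)) (fun K _ => hSKne K)
  have hccard : ((Finset.univ : Finset G.ConnectedComponent).card : ℝ) = (c : ℝ) := by
    rw [Finset.card_univ, hc]
  have hssum : ∑ K : G.ConnectedComponent, ((SK Λ K).card : ℝ) = (n : ℝ) := by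
    rw [hvsum]; push_cast; ring
  rw [hccard, hssum] at hmerge
  have hchain : (ℓ : ℝ) ≤ 3 * ((n:ℝ) - c + 1) - 3 * ((n:ℝ) - c + 1) ^ ((2:ℝ)/3) := by
    have h1 : (ℓ : ℝ) ≤ (Λ.card : ℝ) := by exact_mod_cast hΛ
    have h2 : (Λ.card : ℝ) = ∑ K : G.ConnectedComponent, ((LK Λ K).card : ℝ) := by
      rw [hesum]; push_cast; ring
    have h3 : ∑ K : G.ConnectedComponent, ((LK Λ K).card : ℝ) ≤
        ∑ K : G.ConnectedComponent, (3 * ((SK Λ K).card : ℝ) - 3 * ((SK Λ K).card : ℝ) ^ ((2:ℝ)/3)) :=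
      Finset.sum_le_sum (fun K _ => comp_bound Λ K)
    have h4 : ∑ K : G.ConnectedComponent, (3 * ((SK Λ K).card : ℝ) - 3 * ((SK Λ K).card : ℝ) ^ ((2:ℝ)/3))
        = 3 * (n : ℝ) - 3 * ∑ K : G.ConnectedComponent, ((SK Λ K).card : ℝ) ^ ((2:ℝ)/3) := by
      rw [Finset.sum_sub_distrib, ← Finset.mul_sum, ← Finset.mul_sum, hssum]
    have h5 : ((n:ℝ) - c + 1) ^ ((2:ℝ)/3) + ((c:ℝ) - 1) ≤
        ∑ K : G.ConnectedComponent, ((SK Λ K).card : ℝ) ^ ((2:ℝ)/3) := hmerge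
    have hcR : (c:ℝ) ≤ (n:ℝ) := by exact_mod_cast hcn
    nlinarith [h1, h2.le, h3, h4.le, h5]
  set u := (n:ℝ) - c + 1 with hu
  have hu1 : 1 ≤ u := by
    have : (c:ℝ) ≤ (n:ℝ) := by exact_mod_cast hcn
    rw [hu]; linarith
  have hana := analytic_lemma hu1 (by positivity : (0:ℝ) ≤ (ℓ:ℝ)) hchain
  set L := ((ℓ:ℝ)/3) ^ ((1:ℝ)/3) with hL
  have hL0 : 0 ≤ L := Real.rpow_nonneg (by positivity) _
  have hL3 : L ^ 3 = (ℓ:ℝ) / 3 := cube_rpow_third (by positivity)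
  -- rank bound
  have hrank : (Module.finrank ℝ (Wgrad q 3 Λ) : ℝ) ≤ (c : ℝ) := by
    exact_mod_cast finrank_Wgrad_le Λ
  -- identity for the middle cube root
  have hmid : (3 * (ℓ : ℝ) ^ 2) ^ ((1 : ℝ) / 3) = 3 * L ^ 2 := by
    have hLsq : L ^ 2 = ((ℓ:ℝ)/3) ^ ((2:ℝ)/3) := sq_rpow_third (by positivity)
    rw [hLsq, Real.div_rpow (by positivity) (by norm_num)]
    rw [Real.mul_rpow (by norm_num) (by positivity)]
    rw [← Real.rpow_natCast (ℓ:ℝ) 2, ← Real.rpow_mul (by positivity)]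
    have h3 : (3:ℝ) ^ ((1:ℝ)/3) = 3 / (3:ℝ) ^ ((2:ℝ)/3) := by
      rw [eq_div_iff (by positivity)]
      rw [← Real.rpow_add (by norm_num : (0:ℝ) < 3)]
      norm_num
    rw [h3]
    push_cast
    ring_nf
  -- conclude
  have hc_le : (c : ℝ) ≤ (n:ℝ) + 1 - (L^3 + L^2 + (2/3)*L + 1/3) := by
    rw [hu] at hana
    linarith
  have hnR : (n : ℝ) = (q:ℝ) ^ 3 := by rw [hncard]; push_cast; ring
  calc (Module.finrank ℝ (Wgrad q 3 Λ) : ℝ) ≤ (c : ℝ) := hrank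
    _ ≤ (n:ℝ) + 1 - (L^3 + L^2 + (2/3)*L + 1/3) := hc_le
    _ = (q:ℝ)^3 - (1/3)*((ℓ:ℝ) + 3*L^2 + 2*L) + 2/3 := by
        rw [hnR, hL3]; ring
    _ = (q : ℝ) ^ 3 - (1 / 3) * ((ℓ : ℝ) + (3 * (ℓ : ℝ) ^ 2) ^ ((1 : ℝ) / 3) +
        2 * ((ℓ : ℝ) / 3) ^ ((1 : ℝ) / 3)) + 2 / 3 := by
        rw [hmid, ← hL]

end Main

/-- 3D bound -/
theorem stmt_10 (q : ℕ) (hq : 3 ≤ q) (ℓ : ℕ) (hl : 54 < ℓ) (hlp : ℓ ≤ 3 * q ^ 2 * (q - 1)) :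
    (kappaGrad q 3 ℓ : ℝ) ≤
      (q : ℝ) ^ 3 - (1 / 3) * ((ℓ : ℝ) + (3 * (ℓ : ℝ) ^ 2) ^ ((1 : ℝ) / 3) +
        2 * ((ℓ : ℝ) / 3) ^ ((1 : ℝ) / 3)) + 2 / 3 := by
  classical
  rcases Finset.eq_empty_or_nonempty
      (Finset.univ.filter (fun Λ : Finset (OEdge q 3) => ℓ ≤ Λ.card)) with h | h
  · rw [kappaGrad, h, Finset.sup_empty]
    -- show 0 ≤ RHS
    have hq1 : (1:ℕ) ≤ q := by omega
    set L := ((ℓ:ℝ)/3) ^ ((1:ℝ)/3) with hL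
    have hL0 : 0 ≤ L := Real.rpow_nonneg (by positivity) _
    have hL3 : L ^ 3 = (ℓ:ℝ) / 3 := GridProof.cube_rpow_third (by positivity)
    have hlpR : (ℓ:ℝ) ≤ 3 * (q:ℝ)^2 * ((q:ℝ) - 1) := by
      have : ((3 * q ^ 2 * (q - 1) : ℕ) : ℝ) = 3 * (q:ℝ)^2 * ((q:ℝ) - 1) := by
        push_cast [Nat.cast_sub hq1]
        ring
      rw [← this]
      exact_mod_cast hlp
    have hqR : (3:ℝ) ≤ (q:ℝ) := by exact_mod_cast hq
    have hLq : L ≤ (q:ℝ) - 1/3 := by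
      have hcube : L ^ 3 ≤ ((q:ℝ) - 1/3) ^ 3 := by
        rw [hL3]
        nlinarith [hqR]
      exact (pow_le_pow_iff_left₀ hL0 (by linarith) (by norm_num : (3:ℕ) ≠ 0)).mp hcube
    have hmid : (3 * (ℓ : ℝ) ^ 2) ^ ((1 : ℝ) / 3) = 3 * L ^ 2 := by
      have hLsq : L ^ 2 = ((ℓ:ℝ)/3) ^ ((2:ℝ)/3) := GridProof.sq_rpow_third (by positivity)
      rw [hLsq, Real.div_rpow (by positivity) (by norm_num)]
      rw [Real.mul_rpow (by norm_num) (by positivity)]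
      rw [← Real.rpow_natCast (ℓ:ℝ) 2, ← Real.rpow_mul (by positivity)]
      have h3 : (3:ℝ) ^ ((1:ℝ)/3) = 3 / (3:ℝ) ^ ((2:ℝ)/3) := by
        rw [eq_div_iff (by positivity)]
        rw [← Real.rpow_add (by norm_num : (0:ℝ) < 3)]
        norm_num
      rw [h3]
      push_cast
      ring_nf
    have hgoal : (0:ℝ) ≤ (q : ℝ) ^ 3 - (1 / 3) * ((ℓ : ℝ) + 3 * L ^ 2 + 2 * L) + 2 / 3 := by
      have hl3 : (ℓ:ℝ) = 3 * L ^ 3 := by rw [hL3]; ring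
      rw [hl3]
      nlinarith [hLq, hL0, hqR, hL3, hlpR]
    rw [← hmid] at hgoal
    simpa using hgoal
  · obtain ⟨Λ, hΛmem, hsup⟩ := Finset.exists_mem_eq_sup _ h
      (fun Λ : Finset (OEdge q 3) => Module.finrank ℝ (Wgrad q 3 Λ))
    rw [kappaGrad, hsup]
    rw [Finset.mem_filter] at hΛmem
    exact main_bound q hq ℓ Λ hΛmem.2
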